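/- If the sequence (α_n)_{n≥1} is defined by α_n = (3^k + 1)/2 whenever n = 2^k(2j+1), then Σ_{i=1}^{2^m − 1} α_i = (3^m − 1)/2 for all m ≥ 1. -/

import Mathlib

/-- α_n = (3^k + 1)/2 where n = 2^k(2j+1), i.e. k = v₂(n). -/
def alphaSeq (n : ℕ) : ℕ := (3 ^ (n.factorization 2) + 1) / 2

lemma key (m i : ℕ) (h1 : 1 ≤ i) (h2 : i < 2 ^ m) :
    (2 ^ m + i).factorization 2 = i.factorization 2 := by
  set k := i.factorization 2 with hk
  have hi0 : i ≠ 0 := by omega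
  have hdvd : 2 ^ k ∣ i := Nat.ordProj_dvd i 2
  have hkm : k < m := by
    have : 2 ^ k ≤ i := Nat.le_of_dvd (by omega) hdvd
    have := lt_of_le_of_lt this h2
    exact (Nat.pow_lt_pow_iff_right (by norm_num)).mp this
  have hodd : ¬ 2 ∣ i / 2 ^ k := Nat.not_dvd_ordCompl Nat.prime_two hi0
  have hsplit : 2 ^ m + i = 2 ^ k * (2 ^ (m - k) + i / 2 ^ k) := by
    rw [Nat.mul_add, Nat.mul_div_cancel' hdvd, ← pow_add]
    congr 2
    omega
  have hodd2 : ¬ 2 ∣ (2 ^ (m - k) + i / 2 ^ k) := by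
    intro h
    apply hodd
    have : (2:ℕ) ∣ 2 ^ (m - k) := dvd_pow_self 2 (by omega)
    omega
  rw [hsplit, Nat.factorization_mul (by positivity) (by omega)]
  rw [Nat.Prime.factorization_pow Nat.prime_two]
  simp [Finsupp.single_eq_same, Nat.factorization_eq_zero_of_not_dvd hodd2]

lemma aux : ∀ m : ℕ, 2 * ∑ i ∈ Finset.Icc 1 (2 ^ m - 1), alphaSeq i = 3 ^ m - 1 := by
  intro m
  induction m with
  | zero => simp
  | succ m ih =>
    have h1 : (1:ℕ) ≤ 2 ^ m := Nat.one_le_two_pow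
    have hIcc : ∀ n : ℕ, Finset.Icc 1 n = Finset.Ioc 0 n := by
      intro n; rfl
    have hsplit : ∑ i ∈ Finset.Ioc 0 (2 ^ m) , alphaSeq i +
        ∑ i ∈ Finset.Ioc (2 ^ m) (2 ^ (m+1) - 1), alphaSeq i
        = ∑ i ∈ Finset.Ioc 0 (2 ^ (m+1) - 1), alphaSeq i :=
      Finset.sum_Ioc_consecutive _ (by omega) (by rw [pow_succ]; omega)
    have hmap : Finset.Ioc (2 ^ m) (2 ^ (m+1) - 1) =
        (Finset.Ioc 0 (2 ^ m - 1)).map (addLeftEmbedding (2 ^ m)) := by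
      rw [Finset.map_add_left_Ioc]
      have e1 : 2 ^ m + 0 = 2 ^ m := by omega
      have e2 : 2 ^ m + (2 ^ m - 1) = 2 ^ (m+1) - 1 := by rw [pow_succ]; omega
      rw [e1, e2]
    have hsum2 : ∑ i ∈ Finset.Ioc (2 ^ m) (2 ^ (m+1) - 1), alphaSeq i =
        ∑ i ∈ Finset.Ioc 0 (2 ^ m - 1), alphaSeq i := by
      rw [hmap, Finset.sum_map]
      apply Finset.sum_congr rfl
      intro i hi
      simp only [Finset.mem_Ioc] at hi
      show alphaSeq (2 ^ m + i) = alphaSeq i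
      unfold alphaSeq
      rw [key m i (by omega) (by omega)]
    have hsum1 : ∑ i ∈ Finset.Ioc 0 (2 ^ m), alphaSeq i =
        ∑ i ∈ Finset.Ioc 0 (2 ^ m - 1), alphaSeq i + alphaSeq (2 ^ m) := by
      have : Finset.Ioc 0 (2 ^ m) = insert (2 ^ m) (Finset.Ioc 0 (2 ^ m - 1)) := by
        ext x; simp only [Finset.mem_Ioc, Finset.mem_insert]; omega
      rw [this, Finset.sum_insert (by simp)]
      ring
    have halpha : 2 * alphaSeq (2 ^ m) = 3 ^ m + 1 := by
      unfold alphaSeq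
      rw [Nat.Prime.factorization_pow Nat.prime_two]
      simp only [Finsupp.single_eq_same]
      have : 3 ^ m % 2 = 1 := by
        simp [Nat.pow_mod]
      omega
    have h3 : (1:ℕ) ≤ 3 ^ m := Nat.one_le_pow _ _ (by norm_num)
    rw [hIcc] at ih ⊢
    rw [← hsplit, hsum2, hsum1]
    rw [pow_succ]
    omega

/-- ∑_{i=1}^{2^m−1} α_i = (3^m − 1)/2 for all m ≥ 1. -/
theorem stmt8 : ∀ m : ℕ, 1 ≤ m →
    ∑ i ∈ Finset.Icc 1 (2 ^ m - 1), alphaSeq i = (3 ^ m - 1) / 2 := by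
  intro m _
  have := aux m
  omega
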